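/- Every linear isometry of n-dimensional Euclidean space fixing the origin is a product of at most n hyperplane reflections. Precisely: for every linear isometry equivalence f of EuclideanSpace ℝ (Fin n), there exist k ≤ n and unit vectors v₁, …, v_k such that f equals the composition ρ_{v₁} ∘ ρ_{v₂} ∘ ⋯ ∘ ρ_{v_k}. -/

import Mathlib

set_option linter.unusedSectionVars false

variable {E : Type*} [NormedAddCommGroup E] [InnerProductSpace ℝ E] [FiniteDimensional ℝ E]

open Submodule

lemma refl_unit (u : E) (hu : ‖u‖ = 1) (x : E) :
    reflection (ℝ ∙ u)ᗮ x = x - (2 * (inner ℝ x u : ℝ)) • u := by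
  have h := starProjection_orthogonal_val (𝕜 := ℝ) (K := ℝ ∙ u) x
  rw [reflection_apply, h, starProjection_singleton, hu]
  simp [two_smul, real_inner_comm x u]
  module

lemma refl_zero : reflection (ℝ ∙ (0:E))ᗮ = 1 := by
  ext x
  have hx : x ∈ (ℝ ∙ (0:E))ᗮ := by simp [Submodule.span_zero_singleton]
  simpa using reflection_mem_subspace_eq_self hx

lemma refl_congr {K L : Submodule ℝ E} (h : K = L) : reflection Kᗮ = reflection Lᗮ := by
  subst h; rfl

lemma refl_normalize (v : E) (hv : v ≠ 0) :
    reflection (ℝ ∙ v)ᗮ = reflection (ℝ ∙ (‖v‖⁻¹ • v))ᗮ :=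
  refl_congr (Submodule.span_singleton_smul_eq
    (isUnit_iff_ne_zero.2 (inv_ne_zero (norm_ne_zero_iff.2 hv))) v).symm

lemma normalize_list (l : List E) :
    ∃ w : List E, w.length ≤ l.length ∧ (∀ v ∈ w, ‖v‖ = 1) ∧
      (w.map fun v => reflection (ℝ ∙ v)ᗮ).prod = (l.map fun v => reflection (ℝ ∙ v)ᗮ).prod := by
  induction l with
  | nil => exact ⟨[], le_rfl, by simp, rfl⟩
  | cons a l ih =>
    obtain ⟨w, hw1, hw2, hw3⟩ := ih
    by_cases ha : a = 0
    · refine ⟨w, hw1.trans (Nat.le_succ _), hw2, ?_⟩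
      rw [List.map_cons, List.prod_cons, ha, refl_zero, one_mul, hw3]
    · refine ⟨(‖a‖⁻¹ • a) :: w, by simpa using hw1, ?_, ?_⟩
      · intro v hv
        rcases List.mem_cons.1 hv with rfl | hv
        · simp [norm_smul, norm_norm, inv_mul_cancel₀ (norm_ne_zero_iff.2 ha)]
        · exact hw2 v hv
      · rw [List.map_cons, List.prod_cons, List.map_cons, List.prod_cons, hw3,
          ← refl_normalize a ha]

lemma foldr_eq (w : List E) (hw : ∀ v ∈ w, ‖v‖ = 1) (x : E) :
    (w.map fun v => reflection (ℝ ∙ v)ᗮ).prod x =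
      (w.map (fun v => fun y : E => y - (2 * (inner ℝ y v : ℝ)) • v)).foldr (· ∘ ·) id x := by
  induction w generalizing x with
  | nil => rfl
  | cons a w ih =>
    simp only [List.map_cons, List.prod_cons, List.foldr_cons, Function.comp_apply,
      LinearIsometryEquiv.coe_mul]
    rw [ih (fun v hv => hw v (List.mem_cons_of_mem _ hv)),
      refl_unit a (hw a List.mem_cons_self)]

/-- Every linear isometry of `n`-dimensional Euclidean space fixing the origin is a product of
at most `n` hyperplane reflections `ρ_v : x ↦ x - 2⟪x,v⟫v` for unit vectors `v`. -/
theorem every_linear_isometry_is_product_of_at_most_n_reflections (n : ℕ)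
    (f : EuclideanSpace ℝ (Fin n) ≃ₗᵢ[ℝ] EuclideanSpace ℝ (Fin n)) :
    ∃ k : ℕ, k ≤ n ∧ ∃ v : Fin k → EuclideanSpace ℝ (Fin n),
      (∀ i, ‖v i‖ = 1) ∧
      ∀ x, f x =
        (List.ofFn (fun i => fun y : EuclideanSpace ℝ (Fin n) =>
          y - (2 * (inner ℝ y (v i) : ℝ)) • v i)).foldr (· ∘ ·) id x := by
  obtain ⟨l, hl1, hl2⟩ := f.reflections_generate_dim
  obtain ⟨w, hw1, hw2, hw3⟩ := normalize_list l
  refine ⟨w.length, le_trans hw1 (hl1.trans (by simp)), fun i => w[i],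
    fun i => hw2 _ (List.getElem_mem _), fun x => ?_⟩
  have hfx : f x = (w.map fun v => reflection (ℝ ∙ v)ᗮ).prod x := by rw [hw3, ← hl2]
  rw [hfx, foldr_eq w hw2 x]
  conv_lhs => rw [← List.ofFn_getElem (xs := w)]
  rw [List.map_ofFn]
  rfl
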